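/- For positive semidefinite matrices A and B with A invertible (or on the support of A), the identity sqrt(A)·log(A)·sqrt(A) = A·log(A) holds, and more generally for any complex matrix X, sqrt(X·Xᴴ)·log(X·Xᴴ)·sqrt(X·Xᴴ) = X·log(Xᴴ·X)·Xᴴ, where log is the functional calculus logarithm restricted to the support. -/

import Mathlib

open Matrix ComplexOrder

/-- Matrix logarithm of a Hermitian matrix via the spectral decomposition
(with the convention `log 0 = 0`, i.e. the logarithm restricted to the support). -/
noncomputable def hermLog {n : ℕ} (A : Matrix (Fin n) (Fin n) ℂ) :
    Matrix (Fin n) (Fin n) ℂ :=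
  if h : A.IsHermitian then
    (h.eigenvectorUnitary : Matrix (Fin n) (Fin n) ℂ) *
      diagonal (fun i => (Real.log (h.eigenvalues i) : ℂ)) *
        star (h.eigenvectorUnitary : Matrix (Fin n) (Fin n) ℂ)
  else 0

namespace Matrix.PosSemidef

/-- The positive semidefinite square root (Mathlib's former `Matrix.PosSemidef.sqrt`). -/
noncomputable def sqrt {m 𝕜 : Type*} [Fintype m] [DecidableEq m] [RCLike 𝕜]
    {A : Matrix m m 𝕜} (hA : A.PosSemidef) : Matrix m m 𝕜 :=
  hA.1.eigenvectorUnitary.1 * diagonal ((↑) ∘ Real.sqrt ∘ hA.1.eigenvalues) *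
    (star hA.1.eigenvectorUnitary : Matrix m m 𝕜)

end Matrix.PosSemidef

/-- For a positive semidefinite invertible `A`, `√A (log A) √A = A log A`; and for any
complex square matrix `X`, `√(XXᴴ) log(XXᴴ) √(XXᴴ) = X log(XᴴX) Xᴴ`, where `log` is
the functional-calculus logarithm restricted to the support. -/

-- intertwining lemma
lemma intertwine {n : ℕ} {B C Y : Matrix (Fin n) (Fin n) ℂ}
    (hB : B.IsHermitian) (hC : C.IsHermitian) (hYB : Y * B = C * Y) (f : ℝ → ℂ) :
    Y * ((hB.eigenvectorUnitary : Matrix (Fin n) (Fin n) ℂ) *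
        diagonal (fun i => f (hB.eigenvalues i)) *
        star (hB.eigenvectorUnitary : Matrix (Fin n) (Fin n) ℂ))
      = ((hC.eigenvectorUnitary : Matrix (Fin n) (Fin n) ℂ) *
        diagonal (fun i => f (hC.eigenvalues i)) *
        star (hC.eigenvectorUnitary : Matrix (Fin n) (Fin n) ℂ)) * Y := by
  set U : Matrix (Fin n) (Fin n) ℂ := (hB.eigenvectorUnitary : Matrix (Fin n) (Fin n) ℂ) with hU
  set V : Matrix (Fin n) (Fin n) ℂ := (hC.eigenvectorUnitary : Matrix (Fin n) (Fin n) ℂ) with hV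
  have hUU : U * star U = 1 := (Matrix.mem_unitaryGroup_iff).mp hB.eigenvectorUnitary.2
  have hUU' : star U * U = 1 := (Matrix.mem_unitaryGroup_iff').mp hB.eigenvectorUnitary.2
  have hVV : V * star V = 1 := (Matrix.mem_unitaryGroup_iff).mp hC.eigenvectorUnitary.2
  have hVV' : star V * V = 1 := (Matrix.mem_unitaryGroup_iff').mp hC.eigenvectorUnitary.2
  set M : Matrix (Fin n) (Fin n) ℂ := star V * Y * U with hM
  have key : M * diagonal (RCLike.ofReal ∘ hB.eigenvalues)
      = diagonal (RCLike.ofReal ∘ hC.eigenvalues) * M := by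
    have h1 : Y * B * U = C * Y * U := by rw [hYB]
    have h2 : B = U * diagonal (RCLike.ofReal ∘ hB.eigenvalues) * star U := hB.spectral_theorem
    have h3 : C = V * diagonal (RCLike.ofReal ∘ hC.eigenvalues) * star V := hC.spectral_theorem
    calc M * diagonal (RCLike.ofReal ∘ hB.eigenvalues)
        = star V * (Y * (U * diagonal (RCLike.ofReal ∘ hB.eigenvalues) * star U)) * U := by
          simp only [hM, Matrix.mul_assoc, hUU', Matrix.mul_one]
      _ = star V * (Y * B) * U := by rw [← h2]
      _ = star V * (C * Y) * U := by rw [hYB]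
      _ = star V * ((V * diagonal (RCLike.ofReal ∘ hC.eigenvalues) * star V) * Y) * U := by
          rw [← h3]
      _ = diagonal (RCLike.ofReal ∘ hC.eigenvalues) * M := by
          simp only [hM, Matrix.mul_assoc]
          rw [← Matrix.mul_assoc (star V) V, hVV', Matrix.one_mul]
  have key2 : M * diagonal (fun i => f (hB.eigenvalues i))
      = diagonal (fun i => f (hC.eigenvalues i)) * M := by
    ext i j
    have hij := congrFun (congrFun key i) j
    simp only [Matrix.mul_diagonal, Matrix.diagonal_mul, Function.comp_apply] at hij ⊢
    rcases eq_or_ne (M i j) 0 with h0 | h0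
    · simp [h0]
    · have h' := hij.trans (mul_comm _ (M i j))
      have h'' := mul_left_cancel₀ h0 h'
      have heq : hB.eigenvalues j = hC.eigenvalues i := by exact_mod_cast h''
      rw [heq, mul_comm]
  calc Y * (U * diagonal (fun i => f (hB.eigenvalues i)) * star U)
      = V * (M * diagonal (fun i => f (hB.eigenvalues i))) * star U := by
        simp only [hM, Matrix.mul_assoc]
        rw [← Matrix.mul_assoc V (star V), hVV, Matrix.one_mul]
    _ = V * (diagonal (fun i => f (hC.eigenvalues i)) * M) * star U := by rw [key2]
    _ = V * diagonal (fun i => f (hC.eigenvalues i)) * star V * Y := by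
        simp only [hM, Matrix.mul_assoc, hUU, Matrix.mul_one]

lemma sqrt_hermLog_sqrt {n : ℕ} (A : Matrix (Fin n) (Fin n) ℂ) (hA : A.PosSemidef) :
    hA.sqrt * hermLog A * hA.sqrt = A * hermLog A := by
  have main : ∀ (U : Matrix (Fin n) (Fin n) ℂ) (ev : Fin n → ℝ), star U * U = 1 →
      (∀ i, 0 ≤ ev i) →
      (U * diagonal ((↑) ∘ Real.sqrt ∘ ev) * star U) *
          (U * diagonal (fun i => (Real.log (ev i) : ℂ)) * star U) *
          (U * diagonal ((↑) ∘ Real.sqrt ∘ ev) * star U)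
        = (U * diagonal (RCLike.ofReal ∘ ev) * star U) *
          (U * diagonal (fun i => (Real.log (ev i) : ℂ)) * star U) := by
    intro U ev hUU' hev
    have conj : ∀ d e : Fin n → ℂ,
        (U * diagonal d * star U) * (U * diagonal e * star U) = U * diagonal (d * e) * star U := by
      intro d e
      simp only [Matrix.mul_assoc]
      rw [← Matrix.mul_assoc (star U) U, hUU', Matrix.one_mul, ← Matrix.mul_assoc (diagonal d),
        Matrix.diagonal_mul_diagonal]
      rfl
    rw [conj, conj, conj]
    have hfun : ((Complex.ofReal ∘ Real.sqrt ∘ ev) * fun i => (Real.log (ev i) : ℂ)) *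
        (Complex.ofReal ∘ Real.sqrt ∘ ev)
        = (RCLike.ofReal ∘ ev : Fin n → ℂ) * fun i => (Real.log (ev i) : ℂ) := by
      funext i
      simp only [Pi.mul_apply, Function.comp_apply, RCLike.ofReal_alg]
      have h1 : (Real.sqrt (ev i) : ℂ) * Real.sqrt (ev i) = (ev i : ℂ) := by
        rw [← Complex.ofReal_mul, Real.mul_self_sqrt (hev i)]
      calc (Real.sqrt (ev i) : ℂ) * (Real.log (ev i) : ℂ) * (Real.sqrt (ev i) : ℂ)
          = ((Real.sqrt (ev i) : ℂ) * Real.sqrt (ev i)) * (Real.log (ev i) : ℂ) := by ring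
        _ = _ := by rw [h1]; norm_num
    rw [hfun]
  set U : Matrix (Fin n) (Fin n) ℂ := (hA.1.eigenvectorUnitary : Matrix (Fin n) (Fin n) ℂ) with hU
  have hUU' : star U * U = 1 := (Matrix.mem_unitaryGroup_iff').mp hA.1.eigenvectorUnitary.2
  have hlog : hermLog A = U * diagonal (fun i => (Real.log (hA.1.eigenvalues i) : ℂ)) * star U := by
    rw [hermLog, dif_pos hA.1]
  have hsqrt : hA.sqrt = U * diagonal ((↑) ∘ Real.sqrt ∘ hA.1.eigenvalues) * star U := rfl
  have hspec : A = U * diagonal (RCLike.ofReal ∘ hA.1.eigenvalues) * star U :=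
    hA.1.spectral_theorem
  rw [hlog, hsqrt, main U hA.1.eigenvalues hUU' (fun i => hA.eigenvalues_nonneg i), ← hspec]

theorem sqrt_log_sqrt_identity {n : ℕ} :
    (∀ (A : Matrix (Fin n) (Fin n) ℂ) (hA : A.PosSemidef), IsUnit A.det →
        hA.sqrt * hermLog A * hA.sqrt = A * hermLog A) ∧
      (∀ X : Matrix (Fin n) (Fin n) ℂ,
        (posSemidef_self_mul_conjTranspose X).sqrt * hermLog (X * Xᴴ) *
            (posSemidef_self_mul_conjTranspose X).sqrt
          = X * hermLog (Xᴴ * X) * Xᴴ) := by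
  constructor
  · intro A hA _
    exact sqrt_hermLog_sqrt A hA
  · intro X
    have hB : (X * Xᴴ).IsHermitian := isHermitian_mul_conjTranspose_self X
    have hC : (Xᴴ * X).IsHermitian := (posSemidef_conjTranspose_mul_self X).1
    have hYB : Xᴴ * (X * Xᴴ) = (Xᴴ * X) * Xᴴ := by rw [Matrix.mul_assoc]
    have hint := intertwine hB hC hYB (fun x => (Real.log x : ℂ))
    have hlogB : hermLog (X * Xᴴ) = (hB.eigenvectorUnitary : Matrix (Fin n) (Fin n) ℂ) *
        diagonal (fun i => (Real.log (hB.eigenvalues i) : ℂ)) *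
        star (hB.eigenvectorUnitary : Matrix (Fin n) (Fin n) ℂ) := by
      rw [hermLog, dif_pos hB]
    have hlogC : hermLog (Xᴴ * X) = (hC.eigenvectorUnitary : Matrix (Fin n) (Fin n) ℂ) *
        diagonal (fun i => (Real.log (hC.eigenvalues i) : ℂ)) *
        star (hC.eigenvectorUnitary : Matrix (Fin n) (Fin n) ℂ) := by
      rw [hermLog, dif_pos hC]
    rw [sqrt_hermLog_sqrt _ (posSemidef_self_mul_conjTranspose X)]
    calc X * Xᴴ * hermLog (X * Xᴴ)
        = X * (Xᴴ * hermLog (X * Xᴴ)) := by rw [Matrix.mul_assoc]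
      _ = X * (hermLog (Xᴴ * X) * Xᴴ) := by rw [hlogB, hlogC]; exact congrArg _ hint
      _ = X * hermLog (Xᴴ * X) * Xᴴ := by rw [Matrix.mul_assoc]
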